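/- Let (O, μ) be a multiplicative non-symmetric operad with δ_μ(f) = [μ,f]. Then δ_μ is a graded derivation of the cup product: δ_μ(f ⌣ g) = δ_μ(f) ⌣ g + (-1)^m f ⌣ δ_μ(g) for f ∈ O^m, g ∈ O^n. -/

import Mathlib

open Finset

/-- A non-symmetric unital operad in `k`-modules, presented with an ambient module `A`
whose graded pieces `piece n` play the role of `O^n`, partial compositions
`comp f g i` (denoted `f ∘ᵢ g`, declared to vanish for out-of-range data), and a unit. -/
structure NSOperad (k A : Type) [CommRing k] [AddCommGroup A] [Module k A] where
  piece : ℕ → Submodule k A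
  comp : A → A → ℕ → A
  one : A
  one_mem : one ∈ piece 1
  comp_mem : ∀ {n m : ℕ} {f g : A}, f ∈ piece n → g ∈ piece m → ∀ i : ℕ,
      comp f g i ∈ piece (n + m - 1)
  comp_add_left : ∀ (f f' g : A) (i : ℕ), comp (f + f') g i = comp f g i + comp f' g i
  comp_add_right : ∀ (f g g' : A) (i : ℕ), comp f (g + g') i = comp f g i + comp f g' i
  comp_smul_left : ∀ (c : k) (f g : A) (i : ℕ), comp (c • f) g i = c • comp f g i
  comp_smul_right : ∀ (c : k) (f g : A) (i : ℕ), comp f (c • g) i = c • comp f g i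
  comp_out_of_range : ∀ {n : ℕ} {f : A}, f ∈ piece n → ∀ (g : A) (i : ℕ),
      (n < i ∨ n = 0) → comp f g i = 0
  assoc₁ : ∀ {n m p : ℕ} {f g h : A}, f ∈ piece n → g ∈ piece m → h ∈ piece p →
      ∀ i j : ℕ, 1 ≤ j → j < i → i ≤ n →
      comp (comp f g i) h j = comp (comp f h j) g (i + p - 1)
  assoc₂ : ∀ {n m p : ℕ} {f g h : A}, f ∈ piece n → g ∈ piece m → h ∈ piece p →
      ∀ i j : ℕ, 1 ≤ i → i ≤ j → j < m + i →
      comp (comp f g i) h j = comp f (comp g h (j - i + 1)) i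
  assoc₃ : ∀ {n m p : ℕ} {f g h : A}, f ∈ piece n → g ∈ piece m → h ∈ piece p →
      ∀ i j : ℕ, 1 ≤ i → m + i ≤ j → j ≤ n + m - 1 →
      comp (comp f g i) h j = comp (comp f h (j - m + 1)) g i
  unit_right : ∀ {n : ℕ} {f : A}, f ∈ piece n → ∀ i : ℕ, 1 ≤ i → i ≤ n → comp f one i = f
  unit_left : ∀ f : A, comp one f 1 = f

variable {k A : Type} [CommRing k] [AddCommGroup A] [Module k A]

/-- The circle product `f ∘ g = ∑_{i=1}^n (-1)^{(i-1)(m-1)} f ∘ᵢ g` for `f ∈ O^n`, `g ∈ O^m`.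
(The sign exponent `(i+1)*(m+1)` has the same parity as `(i-1)(m-1)`.) -/
def NSOperad.circle (O : NSOperad k A) (n m : ℕ) (f g : A) : A :=
  ∑ i ∈ Finset.Icc 1 n, ((-1 : ℤ) ^ ((i + 1) * (m + 1))) • O.comp f g i

/-- The cup product `f ⌣ g = (μ ∘₂ f) ∘₁ g` induced by a multiplication `μ ∈ O^2`. -/
def NSOperad.cup (O : NSOperad k A) (μ f g : A) : A :=
  O.comp (O.comp μ f 2) g 1

/-- The operator `δ_μ f = [μ, f] = μ ∘ f - (-1)^{m-1} f ∘ μ` for `f ∈ O^m`. -/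
def NSOperad.dmu (O : NSOperad k A) (μ : A) (m : ℕ) (f : A) : A :=
  O.circle 2 m μ f - ((-1 : ℤ) ^ (m + 1)) • O.circle m 2 f μ


private lemma negpow (a b : ℕ) (h : a % 2 = b % 2) : ((-1 : ℤ) ^ a) = ((-1 : ℤ) ^ b) := by
  rcases Nat.even_or_odd a with ha | ha
  · have hb : Even b := by rw [Nat.even_iff] at *; omega
    rw [ha.neg_one_pow, hb.neg_one_pow]
  · have hb : Odd b := by rw [Nat.odd_iff] at *; omega
    rw [ha.neg_one_pow, hb.neg_one_pow]

private lemma negpow' (a b : ℕ) (h : (a + b) % 2 = 1) : ((-1 : ℤ) ^ a) = -((-1 : ℤ) ^ b) := by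
  have : (-1 : ℤ) ^ a = (-1 : ℤ) ^ (b + 1) := negpow _ _ (by omega)
  rw [this, pow_succ]; ring

namespace NSOperad

variable {k A : Type} [CommRing k] [AddCommGroup A] [Module k A] (O : NSOperad k A)

private lemma comp_zero_right' (f : A) (i : ℕ) : O.comp f 0 i = 0 := by
  have h := O.comp_add_right f 0 0 i
  rw [add_zero] at h
  exact right_eq_add.mp h

private lemma comp_zero_left' (g : A) (i : ℕ) : O.comp 0 g i = 0 := by
  have h := O.comp_add_left 0 0 g i
  rw [add_zero] at h
  exact right_eq_add.mp h

private lemma comp_zsmul_right (c : ℤ) (f g : A) (i : ℕ) :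
    O.comp f (c • g) i = c • O.comp f g i := by
  rw [← Int.cast_smul_eq_zsmul k c g, O.comp_smul_right, Int.cast_smul_eq_zsmul]

private lemma comp_zsmul_left (c : ℤ) (f g : A) (i : ℕ) :
    O.comp (c • f) g i = c • O.comp f g i := by
  rw [← Int.cast_smul_eq_zsmul k c f, O.comp_smul_left, Int.cast_smul_eq_zsmul]

private lemma comp_sub_right (f g g' : A) (i : ℕ) :
    O.comp f (g - g') i = O.comp f g i - O.comp f g' i := by
  have h : O.comp f (-g') i = -O.comp f g' i := by
    have := O.comp_zsmul_right (-1) f g' i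
    simpa using this
  rw [sub_eq_add_neg, O.comp_add_right, h, sub_eq_add_neg]

private lemma comp_sub_left (f f' g : A) (i : ℕ) :
    O.comp (f - f') g i = O.comp f g i - O.comp f' g i := by
  have h : O.comp (-f') g i = -O.comp f' g i := by
    have := O.comp_zsmul_left (-1) f' g i
    simpa using this
  rw [sub_eq_add_neg, O.comp_add_left, h, sub_eq_add_neg]

private lemma comp_sum_right (f : A) (i : ℕ) (s : Finset ℕ) (F : ℕ → A) :
    O.comp f (∑ j ∈ s, F j) i = ∑ j ∈ s, O.comp f (F j) i := by
  classical
  induction s using Finset.induction_on with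
  | empty => simp [O.comp_zero_right']
  | insert _ _ hx ih => rw [Finset.sum_insert hx, O.comp_add_right, ih, Finset.sum_insert hx]

private lemma comp_sum_left (g : A) (i : ℕ) (s : Finset ℕ) (F : ℕ → A) :
    O.comp (∑ j ∈ s, F j) g i = ∑ j ∈ s, O.comp (F j) g i := by
  classical
  induction s using Finset.induction_on with
  | empty => simp [O.comp_zero_left']
  | insert _ _ hx ih => rw [Finset.sum_insert hx, O.comp_add_left, ih, Finset.sum_insert hx]

end NSOperad

/-- `δ_μ` is a graded derivation of the cup product:
`δ_μ(f ⌣ g) = δ_μ(f) ⌣ g + (-1)^m f ⌣ δ_μ(g)` for `f ∈ O^m`, `g ∈ O^n`. -/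
theorem dmu_cup_derivation (O : NSOperad k A) {μ : A} (hμ : μ ∈ O.piece 2)
    (hmul : O.comp μ μ 1 = O.comp μ μ 2) {m n : ℕ} {f g : A}
    (hf : f ∈ O.piece m) (hg : g ∈ O.piece n) :
    O.dmu μ (m + n) (O.cup μ f g)
      = O.cup μ (O.dmu μ m f) g + ((-1 : ℤ) ^ m) • O.cup μ f (O.dmu μ n g) := by
  classical
  have hmem_a : O.comp μ f 2 ∈ O.piece (m + 1) := by
    have h := O.comp_mem hμ hf 2
    rwa [show 2 + m - 1 = m + 1 by omega] at h
  -- key auxiliary identities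
  have key1 : O.comp (O.comp μ f 2) μ 1 = O.comp (O.comp μ μ 2) f 3 := by
    have h := O.assoc₁ hμ hf hμ 2 1 le_rfl (by norm_num) (by norm_num)
    rw [show 2 + 2 - 1 = 3 by norm_num, hmul] at h
    exact h
  have key2 : O.comp μ (O.comp μ f 2) 2 = O.comp (O.comp μ μ 2) f 3 := by
    have h := O.assoc₂ hμ hμ hf 2 3 (by norm_num) (by norm_num) (by norm_num)
    rw [show 3 - 2 + 1 = 2 by norm_num] at h
    exact h.symm
  have key1' : O.comp μ (O.comp μ f 2) 1 = O.comp (O.comp μ μ 2) f 2 := by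
    have h := O.assoc₂ hμ hμ hf 1 2 le_rfl (by norm_num) (by norm_num)
    rw [show 2 - 1 + 1 = 2 by norm_num, hmul] at h
    exact h.symm
  have R1 : O.comp μ (O.comp (O.comp μ f 2) g 1) 1
      = O.comp (O.comp μ (O.comp μ f 1) 2) g 1 := by
    have h := O.assoc₂ hμ hmem_a hg 1 1 le_rfl le_rfl (by omega)
    rw [show 1 - 1 + 1 = 1 by norm_num] at h
    rw [← h, key1']
    have h2 := O.assoc₂ hμ hμ hf 2 2 (by norm_num) le_rfl (by norm_num)
    rw [show 2 - 2 + 1 = 1 by norm_num] at h2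
    rw [h2]
  have R2 : O.comp μ (O.comp (O.comp μ f 2) g 1) 2
      = O.comp (O.comp μ f 2) (O.comp μ g 2) 1 := by
    have h := O.assoc₂ hμ hmem_a hg 2 2 (by norm_num) le_rfl (by omega)
    rw [show 2 - 2 + 1 = 1 by norm_num] at h
    rw [← h]
    have h2 := O.assoc₂ hmem_a hμ hg 1 2 le_rfl (by norm_num) (by norm_num)
    rw [show 2 - 1 + 1 = 2 by norm_num] at h2
    rw [← h2, key1, ← key2]
  have R3 : O.comp (O.comp μ f 2) (O.comp μ g 1) 1
      = O.comp (O.comp μ (O.comp μ f 2) 2) g 1 := by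
    have h2 := O.assoc₂ hmem_a hμ hg 1 1 le_rfl le_rfl (by norm_num)
    rw [show 1 - 1 + 1 = 1 by norm_num] at h2
    rw [← h2, key1, ← key2]
  have R4 : ∀ j : ℕ, 1 ≤ j → j ≤ n →
      O.comp (O.comp (O.comp μ f 2) g 1) μ j
        = O.comp (O.comp μ f 2) (O.comp g μ j) 1 := by
    intro j h1 h2
    have h := O.assoc₂ hmem_a hg hμ 1 j le_rfl h1 (by omega)
    rwa [show j - 1 + 1 = j by omega] at h
  have R5 : ∀ i : ℕ, 1 ≤ i → i ≤ m →
      O.comp (O.comp (O.comp μ f 2) g 1) μ (n + i)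
        = O.comp (O.comp μ (O.comp f μ i) 2) g 1 := by
    intro i h1 h2
    have h := O.assoc₃ hmem_a hg hμ 1 (n + i) le_rfl (by omega) (by omega)
    rw [show n + i - n + 1 = i + 1 by omega] at h
    rw [h]
    have h2' := O.assoc₂ hμ hf hμ 2 (i + 1) (by norm_num) (by omega) (by omega)
    rw [show i + 1 - 2 + 1 = i by omega] at h2'
    rw [h2']
  set E := O.comp (O.comp μ (O.comp μ f 1) 2) g 1
    + ((-1 : ℤ) ^ (m + n + 1)) • O.comp (O.comp μ f 2) (O.comp μ g 2) 1
    + ∑ j ∈ Finset.Ioc 0 n, ((-1 : ℤ) ^ (m + n + j + 1)) • O.comp (O.comp μ f 2) (O.comp g μ j) 1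
    + ∑ i ∈ Finset.Ioc 0 m, ((-1 : ℤ) ^ (m + i + 1)) • O.comp (O.comp μ (O.comp f μ i) 2) g 1
    with hE
  have hIcc2 : Finset.Icc 1 2 = ({1, 2} : Finset ℕ) := by decide
  have hIccIoc : ∀ N : ℕ, Finset.Icc 1 N = Finset.Ioc 0 N := by
    intro N; ext x; rw [Finset.mem_Icc, Finset.mem_Ioc]; omega
  have hL : O.dmu μ (m + n) (O.cup μ f g) = E := by
    simp only [NSOperad.dmu, NSOperad.cup, NSOperad.circle]
    rw [hIcc2, Finset.sum_pair (by norm_num : (1:ℕ) ≠ 2)]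
    rw [R1, R2]
    rw [negpow ((1+1)*(m+n+1)) 0 (by omega), pow_zero, one_smul]
    rw [negpow ((2+1)*(m+n+1)) (m+n+1) (by omega)]
    rw [hIccIoc (m+n)]
    rw [← Finset.sum_Ioc_consecutive
      (fun i => ((-1:ℤ)^((i+1)*(2+1))) • O.comp (O.comp (O.comp μ f 2) g 1) μ i)
      (Nat.zero_le n) (Nat.le_add_left n m)]
    have reidx : ∑ j ∈ Finset.Ioc n (m+n), ((-1:ℤ)^((j+1)*(2+1))) • O.comp (O.comp (O.comp μ f 2) g 1) μ j
        = ∑ i ∈ Finset.Ioc 0 m, ((-1:ℤ)^((n+i+1)*(2+1))) • O.comp (O.comp (O.comp μ f 2) g 1) μ (n+i) := by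
      refine Finset.sum_nbij' (fun j => j - n) (fun i => n + i) ?_ ?_ ?_ ?_ ?_
      · intro a ha; rw [Finset.mem_Ioc] at ha
        show a - n ∈ Finset.Ioc 0 m
        rw [Finset.mem_Ioc]; omega
      · intro a ha; rw [Finset.mem_Ioc] at ha
        show n + a ∈ Finset.Ioc n (m + n)
        rw [Finset.mem_Ioc]; omega
      · intro a ha; rw [Finset.mem_Ioc] at ha
        show n + (a - n) = a
        omega
      · intro a ha; rw [Finset.mem_Ioc] at ha
        show n + a - n = a
        omega
      · intro a ha; rw [Finset.mem_Ioc] at ha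
        rw [show n + (a - n) = a by omega]
    rw [reidx]
    rw [smul_add, sub_add_eq_sub_sub]
    have e1 : ((-1:ℤ)^(m+n+1)) • ∑ j ∈ Finset.Ioc 0 n, ((-1:ℤ)^((j+1)*(2+1))) • O.comp (O.comp (O.comp μ f 2) g 1) μ j
        = -∑ j ∈ Finset.Ioc 0 n, ((-1:ℤ)^(m+n+j+1)) • O.comp (O.comp μ f 2) (O.comp g μ j) 1 := by
      rw [Finset.smul_sum, ← Finset.sum_neg_distrib]
      refine Finset.sum_congr rfl ?_
      intro j hj
      rw [Finset.mem_Ioc] at hj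
      rw [R4 j (by omega) hj.2, smul_smul, ← neg_smul]
      congr 1
      rw [← pow_add]
      exact negpow' _ _ (by omega)
    have e2 : ((-1:ℤ)^(m+n+1)) • ∑ i ∈ Finset.Ioc 0 m, ((-1:ℤ)^((n+i+1)*(2+1))) • O.comp (O.comp (O.comp μ f 2) g 1) μ (n+i)
        = -∑ i ∈ Finset.Ioc 0 m, ((-1:ℤ)^(m+i+1)) • O.comp (O.comp μ (O.comp f μ i) 2) g 1 := by
      rw [Finset.smul_sum, ← Finset.sum_neg_distrib]
      refine Finset.sum_congr rfl ?_
      intro i hi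
      rw [Finset.mem_Ioc] at hi
      rw [R5 i (by omega) hi.2, smul_smul, ← neg_smul]
      congr 1
      rw [← pow_add]
      exact negpow' _ _ (by omega)
    rw [e1, e2, sub_neg_eq_add, sub_neg_eq_add, hE]
  have hR : O.cup μ (O.dmu μ m f) g + ((-1 : ℤ) ^ m) • O.cup μ f (O.dmu μ n g) = E := by
    simp only [NSOperad.dmu, NSOperad.cup, NSOperad.circle]
    rw [hIcc2]
    rw [Finset.sum_pair (by norm_num : (1:ℕ) ≠ 2), Finset.sum_pair (by norm_num : (1:ℕ) ≠ 2)]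
    simp only [O.comp_sub_right, O.comp_add_right, O.comp_zsmul_right, O.comp_sum_right,
      O.comp_sub_left, O.comp_add_left, O.comp_zsmul_left, O.comp_sum_left]
    rw [negpow ((1+1)*(m+1)) 0 (by omega), pow_zero, one_smul,
        negpow ((2+1)*(m+1)) (m+1) (by omega),
        negpow ((1+1)*(n+1)) 0 (by omega), pow_zero, one_smul,
        negpow ((2+1)*(n+1)) (n+1) (by omega)]
    rw [R3]
    simp only [smul_add, smul_sub, smul_smul, ← pow_add]
    rw [hIccIoc m, hIccIoc n]
    have e3 : ((-1:ℤ)^(m+1)) • ∑ i ∈ Finset.Ioc 0 m, ((-1:ℤ)^((i+1)*(2+1))) • O.comp (O.comp μ (O.comp f μ i) 2) g 1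
        = -∑ i ∈ Finset.Ioc 0 m, ((-1:ℤ)^(m+i+1)) • O.comp (O.comp μ (O.comp f μ i) 2) g 1 := by
      rw [Finset.smul_sum, ← Finset.sum_neg_distrib]
      refine Finset.sum_congr rfl ?_
      intro i hi
      rw [smul_smul, ← neg_smul]
      congr 1
      rw [← pow_add]
      exact negpow' _ _ (by omega)
    have e4 : ((-1:ℤ)^(m+(n+1))) • ∑ j ∈ Finset.Ioc 0 n, ((-1:ℤ)^((j+1)*(2+1))) • O.comp (O.comp μ f 2) (O.comp g μ j) 1
        = -∑ j ∈ Finset.Ioc 0 n, ((-1:ℤ)^(m+n+j+1)) • O.comp (O.comp μ f 2) (O.comp g μ j) 1 := by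
      rw [Finset.smul_sum, ← Finset.sum_neg_distrib]
      refine Finset.sum_congr rfl ?_
      intro j hj
      rw [smul_smul, ← neg_smul]
      congr 1
      rw [← pow_add]
      exact negpow' _ _ (by omega)
    rw [e3, e4, sub_neg_eq_add, sub_neg_eq_add, hE]
    module
  exact hL.trans hR.symm
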